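/- Let α ∈ (1,2), C > 0, λ > 0, and assume ν̄(x) ~ C x^{−α} as x → ∞. Then for every y ≥ 0, lim_{x→∞} x Ψ^{(t_x)}(x^{−1/α} y) = −λ y − (C Γ(2−α)/(m(α−1))) y^α, where t_x = (1 − λ x^{1/α − 1})/m (defined for x large enough that t_x ∈ [0, 1/m)). -/

import Mathlib

open MeasureTheory Filter

open Set Real
open scoped ENNReal

/-- The Laplace exponent `Ψ^(t)(ρ) = -ρ + t ∫_0^∞ (1 - e^{-ρ l}) ν(dl)`. -/
noncomputable def Psi (ν : Measure ℝ) (t ρ : ℝ) : ℝ :=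
  -ρ + t * ∫ l, (1 - Real.exp (-(ρ * l))) ∂ν

lemma PW_ae_pos (ν : Measure ℝ) (hν0 : ν (Set.Iic 0) = 0) : ∀ᵐ l ∂ν, 0 < l := by
  rw [ae_iff]
  convert hν0 using 2
  ext l; simp [not_lt]

lemma PW_lint_id (ν : Measure ℝ) (hν0 : ν (Set.Iic 0) = 0)
    (hint : Integrable (fun l : ℝ => l) ν) (m : ℝ) (hm : m = ∫ l, l ∂ν) :
    ∫⁻ l, ENNReal.ofReal l ∂ν = ENNReal.ofReal m := by
  rw [hm]
  exact (ofReal_integral_eq_lintegral_ofReal hint ((PW_ae_pos ν hν0).mono fun l hl => hl.le)).symm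

lemma PW_markov (ν : Measure ℝ) (hν0 : ν (Set.Iic 0) = 0)
    (hint : Integrable (fun l : ℝ => l) ν) (m : ℝ) (hm : m = ∫ l, l ∂ν)
    {c : ℝ} (hc : 0 < c) : ν (Set.Ioi c) ≤ ENNReal.ofReal m / ENNReal.ofReal c := by
  rw [ENNReal.le_div_iff_mul_le (Or.inl (by simp [hc])) (Or.inl ENNReal.ofReal_ne_top)]
  rw [← PW_lint_id ν hν0 hint m hm, mul_comm]
  refine le_trans ?_ (mul_meas_ge_le_lintegral₀
    (ENNReal.measurable_ofReal.comp measurable_id).aemeasurable (ENNReal.ofReal c))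
  gcongr
  intro x hx
  exact ENNReal.ofReal_le_ofReal (le_of_lt hx)

lemma PW_tail_lt_top (ν : Measure ℝ) (hν0 : ν (Set.Iic 0) = 0)
    (hint : Integrable (fun l : ℝ => l) ν) (m : ℝ) (hm : m = ∫ l, l ∂ν)
    {c : ℝ} (hc : 0 < c) : ν (Set.Ioi c) ≠ ⊤ := by
  refine ne_top_of_le_ne_top ?_ (PW_markov ν hν0 hint m hm hc)
  exact (ENNReal.div_lt_top ENNReal.ofReal_ne_top (by simp [hc])).ne

lemma PW_tail_toReal_le (ν : Measure ℝ) (hν0 : ν (Set.Iic 0) = 0)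
    (hint : Integrable (fun l : ℝ => l) ν) (m : ℝ) (hm : m = ∫ l, l ∂ν) (hm0 : 0 ≤ m)
    {c : ℝ} (hc : 0 < c) : (ν (Set.Ioi c)).toReal ≤ m / c := by
  have := ENNReal.toReal_mono (by exact (ENNReal.div_lt_top ENNReal.ofReal_ne_top (by simp [hc])).ne)
    (PW_markov ν hν0 hint m hm hc)
  rwa [ENNReal.toReal_div, ENNReal.toReal_ofReal hm0, ENNReal.toReal_ofReal hc.le] at this

lemma PW_sigmaFinite (ν : Measure ℝ) (hν0 : ν (Set.Iic 0) = 0)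
    (hint : Integrable (fun l : ℝ => l) ν) (m : ℝ) (hm : m = ∫ l, l ∂ν) :
    SigmaFinite ν := by
  refine ⟨⟨⟨fun n => Set.Iic 0 ∪ Set.Ioi ((n : ℝ) + 1)⁻¹, fun _ => trivial, ?_, ?_⟩⟩⟩
  · intro n
    refine lt_of_le_of_lt (measure_union_le _ _) ?_
    rw [hν0, zero_add]
    exact lt_top_iff_ne_top.2 (PW_tail_lt_top ν hν0 hint m hm (by positivity))
  · ext x
    simp only [Set.mem_iUnion, Set.mem_union, Set.mem_Iic, Set.mem_Ioi, Set.mem_univ, iff_true]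
    rcases le_or_gt x 0 with h | h
    · exact ⟨0, Or.inl h⟩
    · obtain ⟨n, hn⟩ := exists_nat_one_div_lt h
      exact ⟨n, Or.inr (by rwa [one_div] at hn)⟩

lemma PW_hasDeriv (s : ℝ) : HasDerivAt (fun t : ℝ => t + Real.exp (-t)) (1 - Real.exp (-s)) s := by
  have h1 : HasDerivAt (fun t : ℝ => Real.exp (-t)) (-Real.exp (-s)) s := by
    have := (Real.hasDerivAt_exp (-s)).comp s (hasDerivAt_neg s)
    rw [mul_neg, mul_one] at this; exact this
  have := (hasDerivAt_id s).add h1; rw [← sub_eq_add_neg] at this; exact this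

lemma PW_int1 (b : ℝ) : ∫ s in (0:ℝ)..b, (1 - Real.exp (-s)) = b + Real.exp (-b) - 1 := by
  have := intervalIntegral.integral_eq_sub_of_hasDerivAt (f := fun t : ℝ => t + Real.exp (-t))
    (a := 0) (b := b) (fun x _ => PW_hasDeriv x)
    (((continuous_const.sub (Real.continuous_exp.comp continuous_neg))).intervalIntegrable 0 b)
  simpa using this

lemma PW_hasDeriv2 (s : ℝ) : HasDerivAt (fun t : ℝ => -Real.exp (-t)) (Real.exp (-s)) s := by
  have h1 : HasDerivAt (fun t : ℝ => Real.exp (-t)) (-Real.exp (-s)) s := by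
    have := (Real.hasDerivAt_exp (-s)).comp s (hasDerivAt_neg s)
    rw [mul_neg, mul_one] at this; exact this
  have := h1.neg; rw [neg_neg] at this; exact this

lemma PW_int2 (b : ℝ) : ∫ s in (0:ℝ)..b, Real.exp (-s) = 1 - Real.exp (-b) := by
  have := intervalIntegral.integral_eq_sub_of_hasDerivAt (f := fun t : ℝ => -Real.exp (-t))
    (a := 0) (b := b) (fun x _ => PW_hasDeriv2 x)
    ((Real.continuous_exp.comp continuous_neg).intervalIntegrable 0 b)
  simpa using this

lemma PW_lint_Ioo {h : ℝ → ℝ} (hc : Continuous h) (hpos : ∀ t, 0 ≤ t → 0 ≤ h t) {b : ℝ} (hb : 0 < b) :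
    ∫⁻ t in Set.Ioi (0:ℝ), Set.indicator (Set.Iio b) (fun t => ENNReal.ofReal (h t)) t
      = ENNReal.ofReal (∫ t in (0:ℝ)..b, h t) := by
  rw [lintegral_indicator measurableSet_Iio, Measure.restrict_restrict measurableSet_Iio]
  have hset : Set.Iio b ∩ Set.Ioi (0:ℝ) = Set.Ioo 0 b := by
    ext x; simp [Set.mem_Ioo, and_comm]
  rw [hset]
  have h2 : ENNReal.ofReal (∫ t in (0:ℝ)..b, h t) = ∫⁻ a in Set.Ioo 0 b, ENNReal.ofReal (h a) := by
    rw [intervalIntegral.integral_of_le hb.le, MeasureTheory.integral_Ioc_eq_integral_Ioo]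
    exact ofReal_integral_eq_lintegral_ofReal
      ((hc.integrableOn_Icc).mono_set Set.Ioo_subset_Icc_self)
      ((ae_restrict_iff' measurableSet_Ioo).2 (ae_of_all _ fun t ht => hpos t ht.1.le))
  rw [h2]

lemma PW_tail_meas (ν : Measure ℝ) : Measurable fun x : ℝ => ν (Set.Ioi x) :=
  Antitone.measurable fun a b hab => measure_mono (Set.Ioi_subset_Ioi hab)

lemma PW_int_exp (ν : Measure ℝ) (hν0 : ν (Set.Iic 0) = 0)
    (hint : Integrable (fun l : ℝ => l) ν) {ρ : ℝ} (hρ : 0 ≤ ρ) :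
    Integrable (fun l : ℝ => 1 - Real.exp (-(ρ * l))) ν := by
  refine Integrable.mono (hint.const_mul ρ)
    ((by fun_prop : Measurable fun l : ℝ => 1 - Real.exp (-(ρ * l)))).aestronglyMeasurable ?_
  refine (PW_ae_pos ν hν0).mono fun l hl => ?_
  have hx : 0 ≤ ρ * l := mul_nonneg hρ hl.le
  have h1 : Real.exp (-(ρ * l)) ≤ 1 := Real.exp_le_one_iff.2 (by linarith)
  have h2 : 1 - Real.exp (-(ρ * l)) ≤ ρ * l := by
    have := Real.add_one_le_exp (-(ρ * l)); linarith
  rw [Real.norm_eq_abs, Real.norm_eq_abs, abs_of_nonneg (by linarith), abs_of_nonneg hx]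
  exact h2

lemma PW_int_g (ν : Measure ℝ) (hν0 : ν (Set.Iic 0) = 0)
    (hint : Integrable (fun l : ℝ => l) ν) {ρ : ℝ} (hρ : 0 ≤ ρ) :
    Integrable (fun l : ℝ => Real.exp (-(ρ * l)) - 1 + ρ * l) ν := by
  have h : (fun l : ℝ => Real.exp (-(ρ * l)) - 1 + ρ * l)
      = fun l : ℝ => ρ * l - (1 - Real.exp (-(ρ * l))) := by ext l; ring
  rw [h]
  exact (hint.const_mul ρ).sub (PW_int_exp ν hν0 hint hρ)

lemma PW_g_nonneg (x : ℝ) : 0 ≤ Real.exp (-x) - 1 + x := by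
  have := Real.add_one_le_exp (-x); linarith

lemma PW_T (ν : Measure ℝ) (hν0 : ν (Set.Iic 0) = 0)
    (hint : Integrable (fun l : ℝ => l) ν) (m : ℝ) (hm : m = ∫ l, l ∂ν)
    {ρ : ℝ} (hρ : 0 < ρ) :
    ∫ l, (Real.exp (-(ρ * l)) - 1 + ρ * l) ∂ν
      = ∫ s in Set.Ioi (0:ℝ), (1 - Real.exp (-s)) * (ν (Set.Ioi (s / ρ))).toReal := by
  haveI := PW_sigmaFinite ν hν0 hint m hm
  set F : ℝ → ℝ → ℝ≥0∞ := fun s l =>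
    ENNReal.ofReal (1 - Real.exp (-s)) *
      Set.indicator {q : ℝ × ℝ | q.1 < ρ * q.2} (fun _ => (1 : ℝ≥0∞)) (s, l) with hF
  have hS : MeasurableSet {q : ℝ × ℝ | q.1 < ρ * q.2} :=
    measurableSet_lt measurable_fst (measurable_snd.const_mul ρ)
  have hFmeas : Measurable (Function.uncurry fun l s => F s l) := by
    apply Measurable.mul
    · exact (by fun_prop : Measurable fun p : ℝ × ℝ => ENNReal.ofReal (1 - Real.exp (-p.2)))
    · exact (measurable_const.indicator hS).comp (measurable_snd.prodMk measurable_fst)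
  -- inner integral over s, for l > 0
  have hInner1 : ∀ l : ℝ, 0 < l →
      ∫⁻ s in Set.Ioi (0:ℝ), F s l = ENNReal.ofReal (Real.exp (-(ρ * l)) - 1 + ρ * l) := by
    intro l hl
    have hpt : ∀ s : ℝ, F s l
        = Set.indicator (Set.Iio (ρ * l)) (fun s => ENNReal.ofReal (1 - Real.exp (-s))) s := by
      intro s
      by_cases h : s < ρ * l <;> simp [hF, Set.indicator, h]
    simp_rw [hpt]
    rw [PW_lint_Ioo (h := fun s => 1 - Real.exp (-s)) (by fun_prop)
      (fun t ht => by
        show (0:ℝ) ≤ 1 - Real.exp (-t)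
        have := Real.exp_le_one_iff.2 (neg_nonpos.2 ht); linarith)
      (mul_pos hρ hl), PW_int1]
    congr 1; ring
  -- inner integral over l, for s > 0
  have hInner2 : ∀ s : ℝ, 0 < s →
      ∫⁻ l, F s l ∂ν = ENNReal.ofReal (1 - Real.exp (-s)) * ν (Set.Ioi (s / ρ)) := by
    intro s hs
    have hiff : ∀ l : ℝ, (s < ρ * l) ↔ (s / ρ < l) := by
      intro l; rw [div_lt_iff₀ hρ, mul_comm]
    have hpt : ∀ l : ℝ, F s l = ENNReal.ofReal (1 - Real.exp (-s)) *
        Set.indicator (Set.Ioi (s / ρ)) (fun _ => (1 : ℝ≥0∞)) l := by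
      intro l
      by_cases h : s / ρ < l
      · simp [hF, Set.indicator, Set.mem_setOf_eq, (hiff l).2 h, h]
      · have h2 : ¬ s < ρ * l := fun hh => h ((hiff l).1 hh)
        simp [hF, Set.indicator, Set.mem_setOf_eq, h, h2]
    simp_rw [hpt]
    rw [lintegral_const_mul _ (measurable_const.indicator measurableSet_Ioi),
      lintegral_indicator measurableSet_Ioi, setLIntegral_one]
  -- swap
  have hswap := lintegral_lintegral_swap (μ := ν) (ν := volume.restrict (Set.Ioi (0:ℝ)))
    (f := fun l s => F s l) hFmeas.aemeasurable
  have hg_nn : 0 ≤ᵐ[ν] fun l : ℝ => Real.exp (-(ρ * l)) - 1 + ρ * l :=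
    Filter.Eventually.of_forall fun l => PW_g_nonneg (ρ * l)
  have hchain : ENNReal.ofReal (∫ l, (Real.exp (-(ρ * l)) - 1 + ρ * l) ∂ν)
      = ∫⁻ s in Set.Ioi (0:ℝ),
          ENNReal.ofReal ((1 - Real.exp (-s)) * (ν (Set.Ioi (s / ρ))).toReal) := by
    calc ENNReal.ofReal (∫ l, (Real.exp (-(ρ * l)) - 1 + ρ * l) ∂ν)
        = ∫⁻ l, ENNReal.ofReal (Real.exp (-(ρ * l)) - 1 + ρ * l) ∂ν :=
          ofReal_integral_eq_lintegral_ofReal (PW_int_g ν hν0 hint hρ.le) hg_nn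
      _ = ∫⁻ l, (∫⁻ s in Set.Ioi (0:ℝ), F s l) ∂ν :=
          lintegral_congr_ae ((PW_ae_pos ν hν0).mono fun l hl => (hInner1 l hl).symm)
      _ = ∫⁻ s in Set.Ioi (0:ℝ), ∫⁻ l, F s l ∂ν := by exact hswap
      _ = ∫⁻ s in Set.Ioi (0:ℝ), ENNReal.ofReal (1 - Real.exp (-s)) * ν (Set.Ioi (s / ρ)) :=
          setLIntegral_congr_fun measurableSet_Ioi (fun s hs => hInner2 s hs)
      _ = ∫⁻ s in Set.Ioi (0:ℝ),
            ENNReal.ofReal ((1 - Real.exp (-s)) * (ν (Set.Ioi (s / ρ))).toReal) := by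
          refine setLIntegral_congr_fun measurableSet_Ioi (fun s hs => ?_)
          rw [ENNReal.ofReal_mul (by
            have := Real.exp_le_one_iff.2 (neg_nonpos.2 hs.le); linarith),
            ENNReal.ofReal_toReal (PW_tail_lt_top ν hν0 hint m hm (div_pos hs hρ))]
  have hTnn : 0 ≤ᵐ[volume.restrict (Set.Ioi (0:ℝ))]
      fun s : ℝ => (1 - Real.exp (-s)) * (ν (Set.Ioi (s / ρ))).toReal :=
    (ae_restrict_iff' measurableSet_Ioi).2 (ae_of_all _ fun s hs =>
      mul_nonneg (by have := Real.exp_le_one_iff.2 (neg_nonpos.2 hs.le); linarith)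
        ENNReal.toReal_nonneg)
  have hTmeas : AEStronglyMeasurable
      (fun s : ℝ => (1 - Real.exp (-s)) * (ν (Set.Ioi (s / ρ))).toReal)
      (volume.restrict (Set.Ioi (0:ℝ))) := by
    refine Measurable.aestronglyMeasurable ?_
    exact (by fun_prop : Measurable fun s : ℝ => 1 - Real.exp (-s)).mul
      (ENNReal.measurable_toReal.comp ((PW_tail_meas ν).comp (measurable_id.div_const ρ)))
  have hgint_nonneg : 0 ≤ ∫ l, (Real.exp (-(ρ * l)) - 1 + ρ * l) ∂ν :=
    integral_nonneg fun l => PW_g_nonneg _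
  rw [integral_eq_lintegral_of_nonneg_ae hTnn hTmeas, ← hchain,
    ENNReal.toReal_ofReal hgint_nonneg]

-- from chunk b (restated to compile standalone)
lemma PW_L {α : ℝ} (hα1 : 1 < α) (hα2 : α < 2) :
    IntegrableOn (fun s : ℝ => (1 - Real.exp (-s)) * s ^ (-α)) (Set.Ioi 0) ∧
    ∫ s in Set.Ioi (0:ℝ), (1 - Real.exp (-s)) * s ^ (-α)
      = Real.Gamma (2 - α) / (α - 1) := by
  set F : ℝ → ℝ → ℝ≥0∞ := fun u s => ENNReal.ofReal (s ^ (-α)) *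
    Set.indicator {q : ℝ × ℝ | q.1 < q.2} (fun q => ENNReal.ofReal (Real.exp (-q.1))) (u, s)
    with hF
  have hFmeas : Measurable (Function.uncurry fun s u => F u s) := by
    apply Measurable.mul
    · exact (by fun_prop : Measurable fun p : ℝ × ℝ => ENNReal.ofReal (p.1 ^ (-α)))
    · apply Measurable.indicator
      · fun_prop
      · exact measurableSet_lt (by fun_prop) (by fun_prop)
  -- step A1 : inner integral over u equals ofReal ((1 - exp (-s)) * s ^ (-α)) for s > 0
  have hA1 : ∀ s : ℝ, 0 < s →
      ∫⁻ u in Set.Ioi (0:ℝ), F u s = ENNReal.ofReal ((1 - Real.exp (-s)) * s ^ (-α)) := by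
    intro s hs
    have hpt : ∀ u : ℝ, F u s = ENNReal.ofReal (s ^ (-α)) *
        Set.indicator (Set.Iio s) (fun u => ENNReal.ofReal (Real.exp (-u))) u := by
      intro u
      by_cases h : u < s <;> simp [hF, Set.indicator, h]
    simp_rw [hpt]
    rw [lintegral_const_mul]
    · rw [PW_lint_Ioo (h := fun t => Real.exp (-t)) (by fun_prop)
        (fun t _ => (Real.exp_pos _).le) hs, PW_int2]
      rw [← ENNReal.ofReal_mul (Real.rpow_nonneg hs.le _)]
      ring_nf
    · exact Measurable.indicator (by fun_prop) measurableSet_Iio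
  -- step A3 : inner integral over s equals ofReal (exp (-u) * u ^ (1 - α) * (α - 1)⁻¹)
  have hA3 : ∀ u : ℝ, 0 < u →
      ∫⁻ s in Set.Ioi (0:ℝ), F u s
        = ENNReal.ofReal (Real.exp (-u) * u ^ ((2 - α) - 1) * (α - 1)⁻¹) := by
    intro u hu
    have hpt : ∀ s : ℝ, F u s =
        Set.indicator (Set.Ioi u) (fun s => ENNReal.ofReal (s ^ (-α) * Real.exp (-u))) s := by
      intro s
      by_cases h : u < s
      · simp [hF, Set.indicator, h, ENNReal.ofReal_mul (Real.rpow_nonneg (hu.trans h).le (-α))]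
      · simp [hF, Set.indicator, h]
    simp_rw [hpt]
    rw [lintegral_indicator measurableSet_Ioi, Measure.restrict_restrict measurableSet_Ioi]
    have hset : Set.Ioi u ∩ Set.Ioi (0:ℝ) = Set.Ioi u := by
      rw [Set.Ioi_inter_Ioi, max_eq_left hu.le]
    rw [hset]
    have hInt : IntegrableOn (fun s : ℝ => s ^ (-α) * Real.exp (-u)) (Set.Ioi u) :=
      (integrableOn_Ioi_rpow_of_lt (by linarith) hu).mul_const _
    have hnn : 0 ≤ᵐ[volume.restrict (Set.Ioi u)] fun s : ℝ => s ^ (-α) * Real.exp (-u) :=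
      (ae_restrict_iff' measurableSet_Ioi).2 (ae_of_all _ fun s hs =>
        mul_nonneg (Real.rpow_nonneg (hu.trans hs).le _) (Real.exp_pos _).le)
    rw [← ofReal_integral_eq_lintegral_ofReal hInt hnn]
    rw [MeasureTheory.integral_mul_const, integral_Ioi_rpow_of_lt (by linarith : -α < -1) hu]
    have hne : α - 1 ≠ 0 := by linarith
    rw [show (2:ℝ) - α - 1 = -α + 1 by ring]
    congr 1
    rw [neg_div, div_eq_mul_inv, ← mul_neg, neg_inv, show -(-α + 1) = α - 1 by ring]
    ring
  -- swap
  have hswap := lintegral_lintegral_swap (μ := volume.restrict (Set.Ioi (0:ℝ)))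
    (ν := volume.restrict (Set.Ioi (0:ℝ))) (f := fun s u => F u s) hFmeas.aemeasurable
  have hGint : IntegrableOn
      (fun u : ℝ => Real.exp (-u) * u ^ ((2 - α) - 1) * (α - 1)⁻¹) (Set.Ioi 0) :=
    (Real.GammaIntegral_convergent (by linarith : (0:ℝ) < 2 - α)).mul_const _
  have hGnn : 0 ≤ᵐ[volume.restrict (Set.Ioi (0:ℝ))]
      fun u : ℝ => Real.exp (-u) * u ^ ((2 - α) - 1) * (α - 1)⁻¹ :=
    (ae_restrict_iff' measurableSet_Ioi).2 (ae_of_all _ fun u hu =>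
      mul_nonneg (mul_nonneg (Real.exp_pos _).le (Real.rpow_nonneg (le_of_lt hu) _))
        (inv_nonneg.2 (by linarith)))
  have hA : ∫⁻ s in Set.Ioi (0:ℝ), ENNReal.ofReal ((1 - Real.exp (-s)) * s ^ (-α))
      = ENNReal.ofReal (Real.Gamma (2 - α) * (α - 1)⁻¹) := by
    calc ∫⁻ s in Set.Ioi (0:ℝ), ENNReal.ofReal ((1 - Real.exp (-s)) * s ^ (-α))
        = ∫⁻ s in Set.Ioi (0:ℝ), ∫⁻ u in Set.Ioi (0:ℝ), F u s :=
          setLIntegral_congr_fun measurableSet_Ioi (fun s hs => (hA1 s hs).symm)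
      _ = ∫⁻ u in Set.Ioi (0:ℝ), ∫⁻ s in Set.Ioi (0:ℝ), F u s := hswap
      _ = ∫⁻ u in Set.Ioi (0:ℝ), ENNReal.ofReal (Real.exp (-u) * u ^ ((2-α)-1) * (α-1)⁻¹) :=
          setLIntegral_congr_fun measurableSet_Ioi (fun u hu => hA3 u hu)
      _ = ENNReal.ofReal (∫ u in Set.Ioi (0:ℝ), Real.exp (-u) * u ^ ((2-α)-1) * (α-1)⁻¹) :=
          (ofReal_integral_eq_lintegral_ofReal hGint hGnn).symm
      _ = ENNReal.ofReal (Real.Gamma (2 - α) * (α - 1)⁻¹) := by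
          rw [MeasureTheory.integral_mul_const, ← Real.Gamma_eq_integral (by linarith : (0:ℝ) < 2 - α)]
  have hnn : 0 ≤ᵐ[volume.restrict (Set.Ioi (0:ℝ))] fun s : ℝ => (1 - Real.exp (-s)) * s ^ (-α) :=
    (ae_restrict_iff' measurableSet_Ioi).2 (ae_of_all _ fun s hs =>
      mul_nonneg (by simp [Real.exp_le_one_iff, le_of_lt (show (0:ℝ) < s from hs)]) (Real.rpow_nonneg (le_of_lt (show (0:ℝ) < s from hs)) _))
  have hmeas : AEStronglyMeasurable (fun s : ℝ => (1 - Real.exp (-s)) * s ^ (-α))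
      (volume.restrict (Set.Ioi (0:ℝ))) :=
    ((by fun_prop : Measurable fun s : ℝ => (1 - Real.exp (-s)) * s ^ (-α))).aestronglyMeasurable
  have hIntg : IntegrableOn (fun s : ℝ => (1 - Real.exp (-s)) * s ^ (-α)) (Set.Ioi 0) :=
    ⟨hmeas, (hasFiniteIntegral_iff_ofReal hnn).2 (by rw [hA]; exact ENNReal.ofReal_lt_top)⟩
  refine ⟨hIntg, ?_⟩
  rw [integral_eq_lintegral_of_nonneg_ae hnn hmeas, hA, ENNReal.toReal_ofReal
    (mul_nonneg (Real.Gamma_pos_of_pos (by linarith : (0:ℝ) < 2 - α)).le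
      (inv_nonneg.2 (by linarith))), div_eq_mul_inv]

lemma PW_core (ν : Measure ℝ) (hν0 : ν (Set.Iic 0) = 0)
    (hint : Integrable (fun l : ℝ => l) ν)
    (m : ℝ) (hm : m = ∫ l, l ∂ν) (hmpos : 0 < m)
    (α C : ℝ) (hα1 : 1 < α) (hα2 : α < 2) (hC : 0 < C)
    (htail : Tendsto (fun x : ℝ => x ^ α * (ν (Set.Ioi x)).toReal) atTop (nhds C)) :
    Tendsto (fun ρ : ℝ => ρ ^ (-α) * ∫ l, (Real.exp (-(ρ * l)) - 1 + ρ * l) ∂ν)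
      (nhdsWithin 0 (Set.Ioi 0)) (nhds (C * (Real.Gamma (2 - α) / (α - 1)))) := by
  obtain ⟨hLint, hLval⟩ := PW_L hα1 hα2
  obtain ⟨z₀, hz₀⟩ := eventually_atTop.1 (htail.eventually_le_const (lt_add_one C))
  set z₁ : ℝ := max z₀ 1 with hz₁
  have hz₁pos : (0:ℝ) < z₁ := lt_of_lt_of_le one_pos (le_max_right _ _)
  set B : ℝ := max (C + 1) (m * z₁ ^ (α - 1)) with hB
  have key : ∀ z : ℝ, 0 < z → z ^ α * (ν (Set.Ioi z)).toReal ≤ B := by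
    intro z hz
    rcases le_or_gt z₁ z with h | h
    · exact le_trans (hz₀ z (le_trans (le_max_left _ _) h)) (le_max_left _ _)
    · refine le_trans ?_ (le_max_right _ _)
      have h1 : z ^ α * (ν (Set.Ioi z)).toReal ≤ z ^ α * (m / z) := by
        apply mul_le_mul_of_nonneg_left
          (PW_tail_toReal_le ν hν0 hint m hm hmpos.le hz)
          (Real.rpow_nonneg hz.le α)
      refine h1.trans ?_
      have h2 : z ^ α * (m / z) = m * z ^ (α - 1) := by
        rw [Real.rpow_sub hz, Real.rpow_one]
        field_simp
      rw [h2]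
      exact mul_le_mul_of_nonneg_left
        (Real.rpow_le_rpow hz.le h.le (by linarith)) hmpos.le
  set f : ℝ → ℝ → ℝ := fun ρ s =>
    ((1 - Real.exp (-s)) * s ^ (-α)) * ((s / ρ) ^ α * (ν (Set.Ioi (s / ρ))).toReal) with hf
  have hfirst_nn : ∀ s : ℝ, 0 < s → 0 ≤ (1 - Real.exp (-s)) * s ^ (-α) := by
    intro s hs
    exact mul_nonneg (by have := Real.exp_le_one_iff.2 (neg_nonpos.2 hs.le); linarith)
      (Real.rpow_nonneg hs.le _)
  have hDCT : Tendsto (fun ρ => ∫ s in Set.Ioi (0:ℝ), f ρ s) (nhdsWithin 0 (Set.Ioi 0))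
      (nhds (∫ s in Set.Ioi (0:ℝ), ((1 - Real.exp (-s)) * s ^ (-α)) * C)) := by
    refine tendsto_integral_filter_of_dominated_convergence
      (fun s => ((1 - Real.exp (-s)) * s ^ (-α)) * B) ?_ ?_ (hLint.mul_const B) ?_
    · refine Filter.Eventually.of_forall fun ρ => Measurable.aestronglyMeasurable ?_
      exact ((by fun_prop : Measurable fun s : ℝ => (1 - Real.exp (-s)) * s ^ (-α))).mul
        ((by fun_prop : Measurable fun s : ℝ => (s / ρ) ^ α).mul
          (ENNReal.measurable_toReal.comp ((PW_tail_meas ν).comp (measurable_id.div_const ρ))))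
    · filter_upwards [self_mem_nhdsWithin] with ρ (hρ : 0 < ρ)
      refine (ae_restrict_iff' measurableSet_Ioi).2 (ae_of_all _ fun s hs => ?_)
      have hsρ : 0 < s / ρ := div_pos hs hρ
      have h1 : 0 ≤ f ρ s := mul_nonneg (hfirst_nn s hs)
        (mul_nonneg (Real.rpow_nonneg hsρ.le _) ENNReal.toReal_nonneg)
      rw [Real.norm_eq_abs, abs_of_nonneg h1]
      exact mul_le_mul_of_nonneg_left (key _ hsρ) (hfirst_nn s hs)
    · refine (ae_restrict_iff' measurableSet_Ioi).2 (ae_of_all _ fun s hs => ?_)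
      have hdiv : Tendsto (fun ρ : ℝ => s / ρ) (nhdsWithin 0 (Set.Ioi 0)) atTop := by
        simp only [div_eq_mul_inv]
        exact Tendsto.const_mul_atTop hs tendsto_inv_nhdsGT_zero
      exact Tendsto.const_mul _ (htail.comp hdiv)
  have hval : ∫ s in Set.Ioi (0:ℝ), ((1 - Real.exp (-s)) * s ^ (-α)) * C
      = C * (Real.Gamma (2 - α) / (α - 1)) := by
    rw [MeasureTheory.integral_mul_const, hLval, mul_comm]
  rw [hval] at hDCT
  refine hDCT.congr' ?_
  filter_upwards [self_mem_nhdsWithin] with ρ (hρ : 0 < ρ)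
  rw [PW_T ν hν0 hint m hm hρ, ← MeasureTheory.integral_const_mul]
  refine setIntegral_congr_fun measurableSet_Ioi fun s hs => ?_
  have hs' : (0:ℝ) < s := hs
  have hsα : (0:ℝ) < s ^ α := Real.rpow_pos_of_pos hs' α
  have hρα : (0:ℝ) < ρ ^ α := Real.rpow_pos_of_pos hρ α
  rw [hf]
  simp only
  rw [Real.div_rpow hs'.le hρ.le, Real.rpow_neg hρ.le, Real.rpow_neg hs'.le]
  field_simp

/-- Let `ν` be a measure on `(0,∞)` with finite positive mean `m` whose tail satisfies
`ν̄(x) ~ C x^{-α}` as `x → ∞`, with `α ∈ (1,2)`, `C > 0`, and let `λ > 0`. Then for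
every `y ≥ 0`, `lim_{x→∞} x Ψ^(t_x)(x^{-1/α} y) = -λ y - (C Γ(2-α)/(m(α-1))) y^α`,
where `t_x = (1 - λ x^{1/α - 1})/m`. -/
theorem Psi_window_limit_stable
    (ν : Measure ℝ) (hν0 : ν (Set.Iic 0) = 0)
    (hint : Integrable (fun l : ℝ => l) ν)
    (m : ℝ) (hm : m = ∫ l, l ∂ν) (hmpos : 0 < m)
    (α C : ℝ) (hα1 : 1 < α) (hα2 : α < 2) (hC : 0 < C)
    (htail : Tendsto (fun x : ℝ => x ^ α * (ν (Set.Ioi x)).toReal)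
      atTop (nhds C))
    (lam : ℝ) (hlam : 0 < lam)
    (y : ℝ) (hy : 0 ≤ y) :
    Tendsto
      (fun x : ℝ =>
        x * Psi ν ((1 - lam * x ^ (1 / α - 1)) / m) (x ^ (-(1 / α)) * y))
      atTop
      (nhds (-(lam * y) - (C * Real.Gamma (2 - α) / (m * (α - 1))) * y ^ α)) := by
  have hαpos : (0:ℝ) < α := by linarith
  have hα1' : α - 1 ≠ 0 := by intro h; linarith [sub_eq_zero.1 h]
  have hmne : m ≠ 0 := hmpos.ne'
  rcases eq_or_lt_of_le hy with h0 | hypos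
  · -- y = 0
    have hfun : (fun x : ℝ =>
        x * Psi ν ((1 - lam * x ^ (1 / α - 1)) / m) (x ^ (-(1 / α)) * y))
        = fun _ : ℝ => (0:ℝ) := by
      ext x
      simp [Psi, ← h0]
    rw [hfun, ← h0, Real.zero_rpow hαpos.ne']
    simpa using tendsto_const_nhds
  · -- y > 0
    set R : ℝ → ℝ := fun ρ => ∫ l, (Real.exp (-(ρ * l)) - 1 + ρ * l) ∂ν with hR
    have hK := PW_core ν hν0 hint m hm hmpos α C hα1 hα2 hC htail
    have ht : Tendsto (fun x : ℝ => (1 - lam * x ^ (1 / α - 1)) / m) atTop (nhds (1 / m)) := by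
      have h1 : Tendsto (fun x : ℝ => x ^ (1 / α - 1)) atTop (nhds 0) := by
        have he : 1 / α - 1 = -(1 - 1 / α) := by ring
        rw [he]
        refine tendsto_rpow_neg_atTop ?_
        have : 1 / α < 1 := by rw [div_lt_one hαpos]; linarith
        linarith
      have h2 : Tendsto (fun x : ℝ => (1 - lam * x ^ (1 / α - 1)) / m) atTop
          (nhds ((1 - lam * 0) / m)) :=
        ((tendsto_const_nhds (x := (1:ℝ))).sub (h1.const_mul lam)).div_const m
      simpa using h2
    have hρten : Tendsto (fun x : ℝ => x ^ (-(1 / α)) * y) atTop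
        (nhdsWithin 0 (Set.Ioi 0)) := by
      rw [tendsto_nhdsWithin_iff]
      constructor
      · have := (tendsto_rpow_neg_atTop (show (0:ℝ) < 1 / α by positivity)).mul_const y
        simpa using this
      · filter_upwards [eventually_gt_atTop 0] with x hx
        exact mul_pos (Real.rpow_pos_of_pos hx _) hypos
    have hcomp : Tendsto
        (fun x : ℝ => (x ^ (-(1 / α)) * y) ^ (-α) * R (x ^ (-(1 / α)) * y)) atTop
        (nhds (C * (Real.Gamma (2 - α) / (α - 1)))) := hK.comp hρten
    have hmain : Tendsto
        (fun x : ℝ => -(lam * y) - ((1 - lam * x ^ (1 / α - 1)) / m) *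
          (y ^ α * ((x ^ (-(1 / α)) * y) ^ (-α) * R (x ^ (-(1 / α)) * y)))) atTop
        (nhds (-(lam * y) - (1 / m) * (y ^ α * (C * (Real.Gamma (2 - α) / (α - 1)))))) :=
      tendsto_const_nhds.sub (ht.mul (tendsto_const_nhds.mul hcomp))
    have hveq : -(lam * y) - (1 / m) * (y ^ α * (C * (Real.Gamma (2 - α) / (α - 1))))
        = -(lam * y) - (C * Real.Gamma (2 - α) / (m * (α - 1))) * y ^ α := by
      field_simp
    rw [hveq] at hmain
    refine hmain.congr' ?_
    filter_upwards [eventually_gt_atTop 0] with x hx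
    set w : ℝ := x ^ (1 / α - 1) with hw
    set ρ : ℝ := x ^ (-(1 / α)) * y with hρdef
    set t : ℝ := (1 - lam * w) / m with htdef
    have hρpos : 0 < ρ := mul_pos (Real.rpow_pos_of_pos hx _) hypos
    have hI : ∫ l, (1 - Real.exp (-(ρ * l))) ∂ν = ρ * m - R ρ := by
      have h1 : R ρ = ∫ l, (ρ * l - (1 - Real.exp (-(ρ * l)))) ∂ν := by
        rw [hR]
        exact integral_congr_ae (ae_of_all _ fun l => by ring)
      have h2 : ∫ l, (ρ * l - (1 - Real.exp (-(ρ * l)))) ∂ν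
          = ρ * m - ∫ l, (1 - Real.exp (-(ρ * l))) ∂ν := by
        rw [integral_sub (hint.const_mul ρ) (PW_int_exp ν hν0 hint hρpos.le),
          MeasureTheory.integral_const_mul, ← hm]
      rw [h2] at h1
      linarith
    have h5 : x * ρ * w = y := by
      have hx1 : x * x ^ (-(1 / α)) * x ^ (1 / α - 1) = 1 := by
        nth_rewrite 1 [← Real.rpow_one x]
        rw [← Real.rpow_add hx, ← Real.rpow_add hx,
          show (1:ℝ) + -(1 / α) + (1 / α - 1) = 0 by ring, Real.rpow_zero]
      calc x * ρ * w = (x * x ^ (-(1 / α)) * x ^ (1 / α - 1)) * y := by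
            rw [hρdef, hw]; ring
        _ = y := by rw [hx1]; ring
    have h6 : y ^ α * ρ ^ (-α) = x := by
      rw [hρdef, Real.mul_rpow (Real.rpow_nonneg hx.le _) hypos.le,
        ← Real.rpow_mul hx.le, show -(1 / α) * -α = 1 by field_simp, Real.rpow_one]
      calc y ^ α * (x * y ^ (-α)) = (y ^ α * y ^ (-α)) * x := by ring
        _ = x := by rw [← Real.rpow_add hypos]; simp
    have h7 : t * m = 1 - lam * w := by
      rw [htdef]; field_simp
    show -(lam * y) - t * (y ^ α * (ρ ^ (-α) * R ρ)) = x * Psi ν t ρ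
    rw [Psi, hI]
    linear_combination (-(t * R ρ)) * h6 + (-(ρ * x)) * h7 + lam * h5
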